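/- arXiv:cond-mat/0612697 — 3 statements merged into one kernel-verified Lean document; each statement's English description precedes it below -/
import Mathlib

section
/- For probability vectors p, q on a finite set of size m, with β ∈ (0,1), c ∈ ℝ such that q_i + βc·p_i ≥ 0 for all i, the Pólya divergence I(p‖q;β,c) := I(p‖q+βcp) + (1/(βc))·I(q‖q+βcp) + ((1+βc)/(βc))·log(1+βc) is non-negative, with equality if and only if p = q. -/
open Real Finset Filter Topology

/-- Kullback-Leibler divergence of finite vectors (with `Real.log` conventions). -/
noncomputable def KL {m : ℕ} (a b : Fin m → ℝ) : ℝ :=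
  ∑ i, a i * Real.log (a i / b i)

/-- The Pólya divergence `I(p‖q; β, c)`. -/
noncomputable def polyaDiv {m : ℕ} (p q : Fin m → ℝ) (β c : ℝ) : ℝ :=
  KL p (fun i => q i + β * c * p i)
    + (1 / (β * c)) * KL q (fun i => q i + β * c * p i)
    + ((1 + β * c) / (β * c)) * Real.log (1 + β * c)

/-- The probability simplex on `m` points. -/
def probSimplex (m : ℕ) : Set (Fin m → ℝ) :=
  {p | (∀ i, 0 ≤ p i) ∧ ∑ i, p i = 1}


private lemma log_ge_one_sub_inv {z : ℝ} (hz : 0 < z) : 1 - z⁻¹ ≤ Real.log z := by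
  have h := Real.log_le_sub_one_of_pos (inv_pos.mpr hz)
  rw [Real.log_inv] at h
  linarith

private lemma log_gt_one_sub_inv {z : ℝ} (hz : 0 < z) (hz1 : z ≠ 1) : 1 - z⁻¹ < Real.log z := by
  have h := Real.log_lt_sub_one_of_pos (inv_pos.mpr hz)
      (fun h => hz1 (by rwa [inv_eq_one] at h))
  rw [Real.log_inv] at h
  linarith

private lemma key_eq {a b x y : ℝ} (hx : 0 < x) (hy : 0 < y) (ha : 0 ≤ a) (hb : 0 ≤ b)
    (h : a * y = b * x) :
    (a+b) * Real.log ((a+b)/(x+y)) = a * Real.log (a/x) + b * Real.log (b/y) := by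
  rcases ha.eq_or_lt with ha0 | ha0
  · have hb0 : b = 0 := by
      have : b * x = 0 := by rw [← h, ← ha0]; ring
      rcases mul_eq_zero.mp this with h' | h' <;> [exact h'; exact absurd h' (ne_of_gt hx)]
    simp [← ha0, hb0]
  rcases hb.eq_or_lt with hb0 | hb0
  · have ha0' : a = 0 := by
      have : a * y = 0 := by rw [h, ← hb0]; ring
      rcases mul_eq_zero.mp this with h' | h' <;> [exact h'; exact absurd h' (ne_of_gt hy)]
    simp [ha0', ← hb0]
  have h1 : a / x = (a+b)/(x+y) := by
    rw [div_eq_div_iff (ne_of_gt hx) (by positivity)]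
    nlinarith
  have h2 : b / y = (a+b)/(x+y) := by
    rw [div_eq_div_iff (ne_of_gt hy) (by positivity)]
    nlinarith
  rw [h1, h2]; ring

private lemma key_lt {a b x y : ℝ} (hx : 0 < x) (hy : 0 < y) (ha : 0 ≤ a) (hb : 0 ≤ b)
    (h : a * y ≠ b * x) :
    (a+b) * Real.log ((a+b)/(x+y)) < a * Real.log (a/x) + b * Real.log (b/y) := by
  rcases ha.eq_or_lt with ha0 | ha0
  · have hb0 : 0 < b := by
      rcases hb.eq_or_lt with hb0 | hb0
      · exact absurd (by rw [← ha0, ← hb0]; ring) h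
      · exact hb0
    have : b/(x+y) < b/y := by
      apply div_lt_div_of_pos_left hb0 hy; linarith
    have hlog := Real.log_lt_log (by positivity) this
    rw [← ha0]
    simp only [zero_add, zero_mul]
    nlinarith
  rcases hb.eq_or_lt with hb0 | hb0
  · have : a/(x+y) < a/x := by
      apply div_lt_div_of_pos_left ha0 hx; linarith
    have hlog := Real.log_lt_log (by positivity) this
    rw [← hb0]
    simp only [add_zero, zero_mul]
    nlinarith
  -- main case: everything positive
  have hab : 0 < a + b := by linarith
  have hxy : 0 < x + y := by linarith
  set z1 := a*(x+y)/(x*(a+b)) with hz1def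
  set z2 := b*(x+y)/(y*(a+b)) with hz2def
  have hz1 : 0 < z1 := by positivity
  have hz2 : 0 < z2 := by positivity
  have hz1ne : z1 ≠ 1 := by
    intro he
    rw [hz1def, div_eq_one_iff_eq (by positivity)] at he
    exact h (by nlinarith)
  have hiden : a * Real.log (a/x) + b * Real.log (b/y) - (a+b) * Real.log ((a+b)/(x+y))
      = a * Real.log z1 + b * Real.log z2 := by
    rw [hz1def, hz2def,
      Real.log_div (by positivity) (by positivity),
      Real.log_div (by positivity) (by positivity),
      Real.log_div (by positivity) (by positivity),
      Real.log_div (by positivity) (by positivity),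
      Real.log_div (by positivity) (by positivity),
      Real.log_mul (by positivity) (by positivity),
      Real.log_mul (by positivity) (by positivity),
      Real.log_mul (by positivity) (by positivity),
      Real.log_mul (by positivity) (by positivity)]
    ring
  have hb1 : a * (1 - z1⁻¹) < a * Real.log z1 :=
    (mul_lt_mul_iff_right₀ ha0).mpr (log_gt_one_sub_inv hz1 hz1ne)
  have hb2 : b * (1 - z2⁻¹) ≤ b * Real.log z2 :=
    mul_le_mul_of_nonneg_left (log_ge_one_sub_inv hz2) hb
  have hv1 : a * (1 - z1⁻¹) = a - x*(a+b)/(x+y) := by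
    rw [hz1def]; field_simp
  have hv2 : b * (1 - z2⁻¹) = b - y*(a+b)/(x+y) := by
    rw [hz2def]; field_simp
  have hzero : (a - x*(a+b)/(x+y)) + (b - y*(a+b)/(x+y)) = 0 := by
    field_simp; ring
  linarith

private lemma key_le {a b x y : ℝ} (hx : 0 < x) (hy : 0 < y) (ha : 0 ≤ a) (hb : 0 ≤ b) :
    (a+b) * Real.log ((a+b)/(x+y)) ≤ a * Real.log (a/x) + b * Real.log (b/y) := by
  rcases eq_or_ne (a*y) (b*x) with h | h
  · exact le_of_eq (key_eq hx hy ha hb h)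
  · exact le_of_lt (key_lt hx hy ha hb h)

private lemma coord (t P Q : ℝ) (ht : t ≠ 0) (h1t : 0 < 1 + t) (hP : 0 ≤ P) (hQ : 0 ≤ Q)
    (hS : 0 ≤ Q + t * P) :
    0 ≤ P * Real.log (P / (Q + t*P)) + (1/t) * (Q * Real.log (Q / (Q + t*P)))
        + (1/t) * ((Q + t*P) * Real.log (1+t)) ∧
    ((P * Real.log (P / (Q + t*P)) + (1/t) * (Q * Real.log (Q / (Q + t*P)))
        + (1/t) * ((Q + t*P) * Real.log (1+t)) = 0) → Q ≤ P) ∧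
    (P = Q → P * Real.log (P / (Q + t*P)) + (1/t) * (Q * Real.log (Q / (Q + t*P)))
        + (1/t) * ((Q + t*P) * Real.log (1+t)) = 0) := by
  rcases hS.eq_or_lt with hS0 | hSpos
  · -- degenerate: Q + t*P = 0
    rw [← hS0]
    simp only [div_zero, Real.log_zero, mul_zero, zero_mul, add_zero]
    refine ⟨le_refl 0, fun _ => ?_, fun _ => by simp⟩
    -- P - Q = (1+t)*P ≥ 0
    nlinarith
  have hSne : Q + t * P ≠ 0 := ne_of_gt hSpos
  rcases lt_or_gt_of_ne ht with htneg | htpos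
  · -- t < 0 : use key with a = S, x = (1+t)S, b = (-t)P, y = (-t)S
    have hx : 0 < (1+t) * (Q + t*P) := by positivity
    have hy : 0 < (-t) * (Q + t*P) := by
      apply mul_pos (by linarith) hSpos
    have hb : 0 ≤ (-t) * P := mul_nonneg (by linarith) hP
    have e2 : (Q + t*P) + (-t)*P = Q := by ring
    have e4 : (1+t) * (Q + t*P) + (-t) * (Q + t*P) = Q + t*P := by ring
    have e3 : Real.log ((Q + t*P) / ((1+t) * (Q + t*P))) = -Real.log (1+t) := by
      rw [show (Q + t*P) / ((1+t) * (Q + t*P)) = (1+t)⁻¹ by field_simp, Real.log_inv]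
    have e1 : Real.log (((-t)*P) / ((-t)*(Q + t*P))) = Real.log (P / (Q + t*P)) := by
      rw [mul_div_mul_left _ _ (by linarith : (-t) ≠ 0)]
    rcases eq_or_ne P Q with hPQ | hPQ
    · -- equality case
      have hcross : (Q + t*P) * ((-t)*(Q + t*P)) = ((-t)*P) * ((1+t)*(Q + t*P)) := by
        rw [hPQ]; ring
      have hk := key_eq hx hy hS hb hcross
      rw [e2, e4, e3, e1] at hk
      have hG : P * Real.log (P / (Q + t*P)) + (1/t) * (Q * Real.log (Q / (Q + t*P)))
          + (1/t) * ((Q + t*P) * Real.log (1+t)) = 0 := by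
        field_simp
        ring_nf at hk ⊢
        linarith [hk]
      exact ⟨le_of_eq hG.symm, fun _ => le_of_eq hPQ.symm, fun _ => hG⟩
    · have hcross : (Q + t*P) * ((-t)*(Q + t*P)) ≠ ((-t)*P) * ((1+t)*(Q + t*P)) := by
        intro he
        apply hPQ
        have h1 : (Q + t*P) * (-t) = ((-t)*P) * (1+t) := by
          have := mul_right_cancel₀ hSne (by linarith [he] : ((Q + t*P) * (-t)) * (Q + t*P) = (((-t)*P) * (1+t)) * (Q + t*P))
          exact this
        have h2 : Q + t*P = (1+t)*P := by
          have ht' : (-t) ≠ 0 := by linarith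
          field_simp at h1
          nlinarith [h1]
        nlinarith [h2]
      have hk := key_lt hx hy hS hb hcross
      rw [e2, e4, e3, e1] at hk
      have hinner : t * P * Real.log (P / (Q + t*P)) + Q * Real.log (Q / (Q + t*P))
          + (Q + t*P) * Real.log (1+t) < 0 := by linarith
      have hteq : t * (P * Real.log (P / (Q + t*P)) + (1/t) * (Q * Real.log (Q / (Q + t*P)))
          + (1/t) * ((Q + t*P) * Real.log (1+t))) = t * P * Real.log (P / (Q + t*P))
            + Q * Real.log (Q / (Q + t*P)) + (Q + t*P) * Real.log (1+t) := by field_simp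
      refine ⟨?_, ?_, fun h => absurd h hPQ⟩
      · nlinarith [hinner, hteq, htneg]
      · intro hG
        rw [hG, mul_zero] at hteq
        linarith
  · -- t > 0 : use key with a = t*P, x = t*S, b = Q, y = S
    have hx : 0 < t * (Q + t*P) := by positivity
    have ha : 0 ≤ t * P := by positivity
    have e2 : t*P + Q = Q + t*P := by ring
    have e4 : t * (Q + t*P) + (Q + t*P) = (1+t) * (Q + t*P) := by ring
    have e1 : Real.log ((t*P) / (t*(Q + t*P))) = Real.log (P / (Q + t*P)) := by
      rw [mul_div_mul_left _ _ (ne_of_gt htpos)]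
    have e3 : Real.log ((Q + t*P) / ((1+t) * (Q + t*P))) = -Real.log (1+t) := by
      rw [show (Q + t*P) / ((1+t) * (Q + t*P)) = (1+t)⁻¹ by field_simp, Real.log_inv]
    rcases eq_or_ne P Q with hPQ | hPQ
    · have hcross : (t*P) * (Q + t*P) = Q * (t*(Q + t*P)) := by rw [hPQ]; ring
      have hk := key_eq hx hSpos ha hQ hcross
      rw [e2, e4, e3, e1] at hk
      have hG : P * Real.log (P / (Q + t*P)) + (1/t) * (Q * Real.log (Q / (Q + t*P)))
          + (1/t) * ((Q + t*P) * Real.log (1+t)) = 0 := by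
        field_simp
        ring_nf at hk ⊢
        linarith [hk]
      exact ⟨le_of_eq hG.symm, fun _ => le_of_eq hPQ.symm, fun _ => hG⟩
    · have hcross : (t*P) * (Q + t*P) ≠ Q * (t*(Q + t*P)) := by
        intro he
        apply hPQ
        have : P * (t * (Q + t*P)) = Q * (t * (Q + t*P)) := by linarith [he]
        exact mul_right_cancel₀ (ne_of_gt hx) this
      have hk := key_lt hx hSpos ha hQ hcross
      rw [e2, e4, e3, e1] at hk
      have hinner : 0 < t * P * Real.log (P / (Q + t*P)) + Q * Real.log (Q / (Q + t*P))
          + (Q + t*P) * Real.log (1+t) := by linarith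
      have hteq : t * (P * Real.log (P / (Q + t*P)) + (1/t) * (Q * Real.log (Q / (Q + t*P)))
          + (1/t) * ((Q + t*P) * Real.log (1+t))) = t * P * Real.log (P / (Q + t*P)) + Q * Real.log (Q / (Q + t*P))
            + (Q + t*P) * Real.log (1+t) := by field_simp
      refine ⟨?_, ?_, fun h => absurd h hPQ⟩
      · nlinarith [hinner, hteq, htpos]
      · intro hG
        rw [hG, mul_zero] at hteq
        linarith

/-- non-negativity of the Pólya divergence, with equality iff `p = q`. -/
theorem polyaDiv_nonneg_and_eq_zero_iff {m : ℕ} (p q : Fin m → ℝ) (β c : ℝ)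
    (hp : p ∈ probSimplex m) (hq : q ∈ probSimplex m)
    (hβ : β ∈ Set.Ioo (0 : ℝ) 1) (hc : c ≠ 0)
    (hdom : ∀ i, 0 ≤ q i + β * c * p i) :
    0 ≤ polyaDiv p q β c ∧ (polyaDiv p q β c = 0 ↔ p = q) := by
  obtain ⟨hp0, hp1⟩ := hp
  obtain ⟨hq0, hq1⟩ := hq
  have ht : β * c ≠ 0 := mul_ne_zero (ne_of_gt hβ.1) hc
  have hsum : ∑ i, (q i + β * c * p i) = 1 + β * c := by
    rw [Finset.sum_add_distrib, ← Finset.mul_sum, hp1, hq1]; ring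
  have h1t : 0 ≤ 1 + β * c := hsum ▸ Finset.sum_nonneg (fun i _ => hdom i)
  rcases h1t.eq_or_lt with h0 | h0
  · -- 1 + β*c = 0, so all denominators vanish and p = q
    have hall : ∀ i, q i + β * c * p i = 0 := by
      intro i
      have := (Finset.sum_eq_zero_iff_of_nonneg (fun i _ => hdom i)).mp
        (hsum.trans h0.symm)
      exact this i (mem_univ i)
    have htm1 : β * c = -1 := by linarith
    have hpq : p = q := by
      funext i
      have := hall i
      rw [htm1] at this
      linarith
    have hval : polyaDiv p q β c = 0 := by
      simp only [polyaDiv, KL]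
      have h1 : ∑ i, p i * Real.log (p i / (q i + β * c * p i)) = 0 :=
        Finset.sum_eq_zero (fun i _ => by rw [hall i, div_zero, Real.log_zero, mul_zero])
      have h2 : ∑ i, q i * Real.log (q i / (q i + β * c * p i)) = 0 :=
        Finset.sum_eq_zero (fun i _ => by rw [hall i, div_zero, Real.log_zero, mul_zero])
      rw [h1, h2, ← h0, Real.log_zero]
      ring
    exact ⟨le_of_eq hval.symm, by rw [hval]; exact ⟨fun _ => hpq, fun _ => rfl⟩⟩
  · have hco := fun i => coord (β * c) (p i) (q i) ht h0 (hp0 i) (hq0 i) (hdom i)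
    have hrepr : polyaDiv p q β c
        = ∑ i, (p i * Real.log (p i / (q i + β * c * p i))
            + (1/(β*c)) * (q i * Real.log (q i / (q i + β * c * p i)))
            + (1/(β*c)) * ((q i + β * c * p i) * Real.log (1 + β * c))) := by
      simp only [polyaDiv, KL]
      rw [Finset.sum_add_distrib, Finset.sum_add_distrib, ← Finset.mul_sum, ← Finset.mul_sum,
        ← Finset.sum_mul, hsum]
      ring
    constructor
    · rw [hrepr]
      exact Finset.sum_nonneg (fun i _ => (hco i).1)
    constructor
    · intro hz
      rw [hrepr] at hz
      have hGz := (Finset.sum_eq_zero_iff_of_nonneg (fun i _ => (hco i).1)).mp hz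
      have hle : ∀ i ∈ Finset.univ, q i ≤ p i := fun i _ => (hco i).2.1 (hGz i (mem_univ i))
      have hsq : ∑ i, q i = ∑ i, p i := by rw [hp1, hq1]
      funext i
      exact ((Finset.sum_eq_sum_iff_of_le hle).mp hsq i (mem_univ i)).symm
    · intro hpq
      rw [hrepr]
      exact Finset.sum_eq_zero (fun i _ => (hco i).2.2 (congrFun hpq i))
end

section
/- The Pólya divergence I(p‖q;β,c) converges to the Kullback-Leibler divergence I(p‖q) as c → 0 (for fixed p, q with q_i > 0 for all i and fixed β ∈ (0,1)). -/
open Real Finset Filter Topology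

/-- the Pólya divergence converges to the KL divergence as `c → 0`. -/
theorem polyaDiv_tendsto_KL {m : ℕ} (p q : Fin m → ℝ) (β : ℝ)
    (hp : p ∈ probSimplex m) (hq : q ∈ probSimplex m)
    (hqpos : ∀ i, 0 < q i) (hβ : β ∈ Set.Ioo (0 : ℝ) 1) :
    Tendsto (fun c => polyaDiv p q β c) (𝓝[≠] 0) (𝓝 (KL p q)) := by
  obtain ⟨hβ0, hβ1⟩ := hβ
  have hβne : β ≠ 0 := ne_of_gt hβ0
  -- Step A : first term is continuous at 0
  have hA : Tendsto (fun c => KL p (fun i => q i + β * c * p i)) (𝓝[≠] (0:ℝ))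
      (𝓝 (KL p q)) := by
    have hcont : ContinuousAt (fun c => KL p (fun i => q i + β * c * p i)) 0 := by
      unfold KL
      apply tendsto_finset_sum
      intro i _
      rcases eq_or_lt_of_le (hp.1 i) with hpi | hpi
      · simp only [← hpi, zero_mul]
        exact continuousAt_const
      · apply ContinuousAt.mul continuousAt_const
        apply ContinuousAt.log
        · exact continuousAt_const.div (by fun_prop) (by simp [(hqpos i).ne'])
        · simp [div_eq_zero_iff, hpi.ne', (hqpos i).ne']
    have h0 : KL p (fun i => q i + β * (0:ℝ) * p i) = KL p q := by
      unfold KL; simp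
    have h1 : Tendsto (fun c => KL p (fun i => q i + β * c * p i)) (𝓝[≠] (0:ℝ))
        (𝓝 (KL p (fun i => q i + β * (0:ℝ) * p i))) :=
      hcont.tendsto.mono_left nhdsWithin_le_nhds
    rwa [h0] at h1
  -- Step B : derivative of c ↦ KL q (q + βcp) at 0 is -β
  have hg : ∀ i : Fin m, HasDerivAt
      (fun c => q i * Real.log (q i / (q i + β * c * p i))) (-(β * p i)) 0 := by
    intro i
    have hqi := hqpos i
    have hden : HasDerivAt (fun c => q i + β * c * p i) (β * p i) 0 := by
      have h1 : HasDerivAt (fun c : ℝ => (β * p i) * c) ((β * p i) * 1) 0 :=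
        (hasDerivAt_id (0:ℝ)).const_mul (β * p i)
      have h2 := (hasDerivAt_const (0:ℝ) (q i)).fun_add h1
      have : (fun c : ℝ => q i + (β * p i) * c) = fun c => q i + β * c * p i := by
        funext c; ring
      rw [this] at h2
      simpa using h2
    have hne0 : q i + β * 0 * p i ≠ 0 := by simpa using hqi.ne'
    have hfrac := (hasDerivAt_const (0:ℝ) (q i)).fun_div hden hne0
    have hval : q i / (q i + β * 0 * p i) ≠ 0 := by
      simp [div_self hqi.ne']
    have hlog := hfrac.log hval
    have := hlog.const_mul (q i)
    convert this using 1
    · rfl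
    · rfl
    field_simp [hqi.ne']
    ring
  have hsum : HasDerivAt (fun c => KL q (fun i => q i + β * c * p i)) (-β) 0 := by
    have h := HasDerivAt.fun_sum (fun i (_ : i ∈ Finset.univ) => hg i)
    have hv : ∑ i : Fin m, -(β * p i) = -β := by
      rw [Finset.sum_neg_distrib, ← Finset.mul_sum, hp.2, mul_one]
    rw [hv] at h
    unfold KL
    exact h
  have hg0 : KL q (fun i => q i + β * (0:ℝ) * p i) = 0 := by
    unfold KL
    exact Finset.sum_eq_zero fun i _ => by simp [div_self (hqpos i).ne']
  have hB : Tendsto (fun c => (1 / (β * c)) * KL q (fun i => q i + β * c * p i))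
      (𝓝[≠] (0:ℝ)) (𝓝 (-1)) := by
    have hs := hasDerivAt_iff_tendsto_slope.mp hsum
    have hs' := hs.const_mul β⁻¹
    have hlim : β⁻¹ * (-β) = -1 := by field_simp
    rw [hlim] at hs'
    refine hs'.congr' ?_
    filter_upwards [self_mem_nhdsWithin] with c hc
    have hcne : c ≠ 0 := hc
    rw [slope_def_field]
    show β⁻¹ * ((KL q (fun i => q i + β * c * p i) - KL q (fun i => q i + β * 0 * p i)) / (c - 0)) = _
    rw [hg0]
    field_simp
    ring
  -- Step C : third term tends to 1
  have hlin : HasDerivAt (fun c : ℝ => 1 + β * c) β 0 := by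
    have h1 : HasDerivAt (fun c : ℝ => β * c) (β * 1) 0 :=
      (hasDerivAt_id (0:ℝ)).const_mul β
    simpa using (hasDerivAt_const (0:ℝ) (1:ℝ)).fun_add h1
  have hne1 : (1:ℝ) + β * 0 ≠ 0 := by norm_num
  have hlog3 := hlin.log hne1
  have hprod := hlin.mul hlog3
  have hprodval : β * Real.log (1 + β * 0) + (1 + β * 0) * (β / (1 + β * 0)) = β := by
    simp
  rw [hprodval] at hprod
  have hC : Tendsto (fun c => ((1 + β * c) / (β * c)) * Real.log (1 + β * c))
      (𝓝[≠] (0:ℝ)) (𝓝 1) := by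
    have hs := hasDerivAt_iff_tendsto_slope.mp hprod
    have hs' := hs.const_mul β⁻¹
    have hlim : β⁻¹ * β = 1 := by field_simp
    rw [hlim] at hs'
    refine hs'.congr' ?_
    filter_upwards [self_mem_nhdsWithin] with c hc
    have hcne : c ≠ 0 := hc
    rw [slope_def_field]
    show β⁻¹ * (((1 + β * c) * Real.log (1 + β * c) - (1 + β * 0) * Real.log (1 + β * 0)) / (c - 0)) = _
    simp only [mul_zero, add_zero, Real.log_one, mul_zero, sub_zero]
    field_simp
  have htotal := (hA.add hB).add hC
  have : KL p q + -1 + 1 = KL p q := by ring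
  rw [this] at htotal
  exact htotal.congr fun c => by simp [polyaDiv]
end

section
/- Form of the Pólya I-projection on a linear family: let Π = {p : Σ_i p_i u_j(x_i) = a_j, j = 0,…,J} with u_0 ≡ 1, a_0 = 1, be nonempty, and suppose p̂(β,c) is an interior minimizer of the Pólya divergence I(·‖q;β,c) over Π. Then there exist Lagrange multipliers λ_0,…,λ_J such that p̂_i(β,c) = q_i·e^{−Σ_{j=0}^J λ_j u_j(x_i)} / (1 − βc·e^{−Σ_{j=0}^J λ_j u_j(x_i)}) for each i. -/
open Real Finset Filter Topology

/-- implicit exponential form of the Pólya I-projection of `q` on a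
linear family `{p : ∑ᵢ pᵢ·uⱼ(xᵢ) = aⱼ, j = 0,…,J}` (with `u₀ ≡ 1`, `a₀ = 1`),
when the minimizer `phat` is interior. -/
theorem polya_Iprojection_linear_family {m J : ℕ} (q : Fin m → ℝ) (β c : ℝ)
    (u : Fin (J + 1) → Fin m → ℝ) (a : Fin (J + 1) → ℝ) (phat : Fin m → ℝ)
    (hq : q ∈ probSimplex m) (hqpos : ∀ i, 0 < q i)
    (hβ : β ∈ Set.Ioo (0 : ℝ) 1) (hc : c ≠ 0)
    (hu0 : ∀ i, u 0 i = 1) (ha0 : a 0 = 1)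
    (hmem : phat ∈ probSimplex m) (hcons : ∀ j, ∑ i, phat i * u j i = a j)
    (hint : ∀ i, 0 < phat i) (hdom : ∀ i, 0 < q i + β * c * phat i)
    (hmin : ∀ p ∈ probSimplex m, (∀ j, ∑ i, p i * u j i = a j) →
      polyaDiv phat q β c ≤ polyaDiv p q β c) :
    ∃ lam : Fin (J + 1) → ℝ, ∀ i,
      phat i = q i * Real.exp (-∑ j, lam j * u j i) /
        (1 - β * c * Real.exp (-∑ j, lam j * u j i)) := by
  obtain ⟨hβ0, hβ1⟩ := hβ
  have hbc : β * c ≠ 0 := mul_ne_zero hβ0.ne' hc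
  set f : Fin m → ℝ := fun i => Real.log ((q i + β * c * phat i) / phat i) with hfdef
  have key : ∀ v : Fin m → ℝ, (∀ j, ∑ i, v i * u j i = 0) → ∑ i, v i * f i = 0 := by
    intro v hv
    have hterm : ∀ i : Fin m, HasDerivAt (fun t : ℝ =>
        (phat i + t * v i) * Real.log ((phat i + t * v i) / (q i + β * c * (phat i + t * v i)))
        + (1 / (β * c)) * (q i * Real.log (q i / (q i + β * c * (phat i + t * v i)))))
        (-(v i * f i)) 0 := by
      intro i
      have hP : HasDerivAt (fun t : ℝ => phat i + t * v i) (v i) 0 := by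
        simpa using (((hasDerivAt_id (0:ℝ)).mul_const (v i)).const_add (phat i))
      have hD : HasDerivAt (fun t : ℝ => q i + β * c * (phat i + t * v i)) (β * c * v i) 0 :=
        (hP.const_mul (β * c)).const_add (q i)
      have hp0 : (0:ℝ) < phat i + 0 * v i := by simpa using hint i
      have hd0 : (0:ℝ) < q i + β * c * (phat i + 0 * v i) := by simpa using hdom i
      have hR := hP.fun_div hD hd0.ne'
      have hlog1 := hR.log (div_ne_zero hp0.ne' hd0.ne')
      have hF1 := hP.fun_mul hlog1
      have hRq := (hasDerivAt_const (0:ℝ) (q i)).fun_div hD hd0.ne'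
      have hlog2 := hRq.log (div_ne_zero (hqpos i).ne' hd0.ne')
      have hF2 := (hlog2.const_mul (q i)).const_mul (1 / (β * c))
      have hsum := hF1.fun_add hF2
      have hP' : phat i ≠ 0 := (hint i).ne'
      have hD' : q i + β * c * phat i ≠ 0 := (hdom i).ne'
      refine HasDerivAt.congr_deriv hsum ?_
      simp only [hfdef, zero_mul, add_zero]
      rw [Real.log_div hD' hP', Real.log_div hP' hD']
      field_simp [hP', hD', (hqpos i).ne', hbc]
      ring
    have hmono : IsLocalMin (fun t : ℝ => polyaDiv (fun i => phat i + t * v i) q β c) 0 := by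
      have hpos : ∀ᶠ t : ℝ in 𝓝 0, ∀ i, 0 < phat i + t * v i := by
        rw [Filter.eventually_all]
        intro i
        exact continuousAt_const.eventually_lt (by fun_prop) (by simpa using hint i)
      filter_upwards [hpos] with t ht
      have hsum : ∀ j, ∑ i, (phat i + t * v i) * u j i = a j := by
        intro j
        have h1 : ∑ i, (phat i + t * v i) * u j i
            = (∑ i, phat i * u j i) + t * ∑ i, v i * u j i := by
          rw [Finset.mul_sum, ← Finset.sum_add_distrib]
          exact Finset.sum_congr rfl fun i _ => by ring
        rw [h1, hv j, hcons j]; ring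
      have hmem' : (fun i => phat i + t * v i) ∈ probSimplex m := by
        refine ⟨fun i => (ht i).le, ?_⟩
        simpa [hu0, ha0] using hsum 0
      have := hmin _ hmem' hsum
      simpa using this
    have hderiv : HasDerivAt (fun t : ℝ => polyaDiv (fun i => phat i + t * v i) q β c)
        (∑ i, -(v i * f i)) 0 := by
      have heq : (fun t : ℝ => polyaDiv (fun i => phat i + t * v i) q β c)
          = fun t => (∑ i, ((phat i + t * v i) * Real.log ((phat i + t * v i) / (q i + β * c * (phat i + t * v i)))
            + (1 / (β * c)) * (q i * Real.log (q i / (q i + β * c * (phat i + t * v i))))))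
            + ((1 + β * c) / (β * c)) * Real.log (1 + β * c) := by
        funext t
        simp only [polyaDiv, KL]
        rw [Finset.mul_sum, ← Finset.sum_add_distrib]
      rw [heq]
      exact (HasDerivAt.fun_sum (fun i _ => hterm i)).add_const _
    have h0 := hmono.hasDerivAt_eq_zero hderiv
    rw [Finset.sum_neg_distrib, neg_eq_zero] at h0
    exact h0
  -- Step 2: f lies in the span of the u j
  have hfmem : (WithLp.toLp 2 f : EuclideanSpace ℝ (Fin m)) ∈
      Submodule.span ℝ (Set.range (fun j => (WithLp.toLp 2 (u j) : EuclideanSpace ℝ (Fin m)))) := by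
    set U : Submodule ℝ (EuclideanSpace ℝ (Fin m)) :=
      Submodule.span ℝ (Set.range (fun j => (WithLp.toLp 2 (u j) : EuclideanSpace ℝ (Fin m)))) with hU
    rw [← Submodule.orthogonal_orthogonal U]
    rw [Submodule.mem_orthogonal]
    intro w hw
    rw [Submodule.mem_orthogonal] at hw
    have hwv : ∀ j, ∑ i, w i * u j i = 0 := by
      intro j
      have := hw (WithLp.toLp 2 (u j)) (Submodule.subset_span ⟨j, rfl⟩)
      simpa [PiLp.inner_apply, RCLike.inner_apply, mul_comm] using this
    have := key w hwv
    simpa [PiLp.inner_apply, RCLike.inner_apply, mul_comm] using this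
  rw [Submodule.mem_span_range_iff_exists_fun] at hfmem
  obtain ⟨lam, hlam⟩ := hfmem
  refine ⟨lam, fun i => ?_⟩
  have hfi : ∑ j, lam j * u j i = f i := by
    have hlam' : (∑ j, lam j • u j : Fin m → ℝ) = f := by
      have := congrArg WithLp.ofLp hlam; simpa using this
    have := congrFun hlam' i
    simpa [Finset.sum_apply] using this
  rw [hfi]
  have hE : Real.exp (-(f i)) = phat i / (q i + β * c * phat i) := by
    have hneg : -(f i) = Real.log (phat i / (q i + β * c * phat i)) := by
      rw [hfdef]
      simp only
      rw [Real.log_div (hdom i).ne' (hint i).ne', Real.log_div (hint i).ne' (hdom i).ne']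
      ring
    rw [hneg, Real.exp_log (div_pos (hint i) (hdom i))]
  rw [hE]
  have hq' : q i ≠ 0 := (hqpos i).ne'
  have hD' : q i + β * c * phat i ≠ 0 := (hdom i).ne'
  have hden : 1 - β * c * (phat i / (q i + β * c * phat i)) = q i / (q i + β * c * phat i) := by
    field_simp
    ring
  rw [hden]
  field_simp
  exact (mul_div_cancel_right₀ _ (by nlinarith [hdom i] : (0:ℝ) < _).ne').symm
end
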